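/- (Comparison of Jensen functionals, superquadratic case, upper bound) Under the same hypotheses as the lower-bound theorem (f superquadratic on [0,∞) with superadditive continuously differentiable derivative, x increasing, p, q as before), with M* = max_i{mᵢ, m̄ᵢ} where mᵢ = (∑_{j≤i}pⱼ)/(∑_{j≤i}qⱼ), m̄ᵢ = (∑_{j≥i}pⱼ)/(∑_{j≥i}qⱼ): Jₙ(f,x,p) - M* Jₙ(f,x,q) ≤ -∑(M* qᵢ - pᵢ) f(|xᵢ - ∑qⱼxⱼ|) - f(|∑(pᵢ - qᵢ)xᵢ|). -/

import Mathlib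

open Finset

lemma abel_sum (w g : ℕ → ℝ) (m : ℕ) :
    ∑ i ∈ range m, w i * g i
      = ∑ j ∈ range m, (∑ i ∈ range (j+1), w i) * (g j - g (j+1))
        + (∑ i ∈ range m, w i) * g m := by
  induction m with
  | zero => simp
  | succ m ih =>
    rw [sum_range_succ, ih, sum_range_succ (fun j => (∑ i ∈ range (j+1), w i) * (g j - g (j+1))),
      sum_range_succ w]
    ring

lemma stef_high (w g : ℕ → ℝ) (m : ℕ) (hm : 1 ≤ m)
    (hg : ∀ i j, i ≤ j → j < m → g i ≤ g j)
    (hw1 : ∑ i ∈ range m, w i = 1)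
    (hW0 : ∀ j ≤ m, 0 ≤ ∑ i ∈ range j, w i) :
    ∑ i ∈ range m, w i * g i ≤ g (m-1) := by
  set g' : ℕ → ℝ := fun j => g (min j (m-1)) with hg'
  have hrw : ∑ i ∈ range m, w i * g i = ∑ i ∈ range m, w i * g' i := by
    refine sum_congr rfl fun i hi => ?_
    rw [mem_range] at hi
    simp [hg', Nat.min_eq_left (Nat.le_sub_one_of_lt hi)]
  rw [hrw, abel_sum w g' m, hw1, one_mul]
  have : g' m = g (m-1) := by simp [hg']
  rw [this]
  have h1 : ∑ j ∈ range m, (∑ i ∈ range (j+1), w i) * (g' j - g' (j+1)) ≤ 0 := by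
    refine sum_nonpos fun j hj => ?_
    rw [mem_range] at hj
    have hW := hW0 (j+1) (by omega)
    have hmono : g' j ≤ g' (j+1) := by
      refine hg _ _ (min_le_min (Nat.le_succ j) le_rfl) ?_
      have : min (j+1) (m-1) ≤ m - 1 := min_le_right _ _
      omega
    nlinarith
  linarith

lemma stef_low (w g : ℕ → ℝ) (m : ℕ) (hm : 1 ≤ m)
    (hg : ∀ i j, i ≤ j → j < m → g i ≤ g j)
    (hw1 : ∑ i ∈ range m, w i = 1)
    (hW1 : ∀ j ≤ m, ∑ i ∈ range j, w i ≤ 1) :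
    g 0 ≤ ∑ i ∈ range m, w i * g i := by
  set g' : ℕ → ℝ := fun j => g (min j (m-1)) with hg'
  have hrw : ∑ i ∈ range m, w i * g i = ∑ i ∈ range m, w i * g' i := by
    refine sum_congr rfl fun i hi => ?_
    rw [mem_range] at hi
    simp [hg', Nat.min_eq_left (Nat.le_sub_one_of_lt hi)]
  have htel : ∑ j ∈ range m, (g' (j+1) - g' j) = g' m - g' 0 := sum_range_sub g' m
  have h0 : g' 0 = g 0 := by simp [hg']
  have hkey : 0 ≤ ∑ j ∈ range m, (1 - ∑ i ∈ range (j+1), w i) * (g' (j+1) - g' j) := by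
    refine sum_nonneg fun j hj => ?_
    rw [mem_range] at hj
    have hW := hW1 (j+1) (by omega)
    have hmono : g' j ≤ g' (j+1) := by
      refine hg _ _ (min_le_min (Nat.le_succ j) le_rfl) ?_
      have : min (j+1) (m-1) ≤ m - 1 := min_le_right _ _
      omega
    nlinarith
  have hid : ∑ j ∈ range m, (1 - ∑ i ∈ range (j+1), w i) * (g' (j+1) - g' j)
      = ∑ j ∈ range m, (g' (j+1) - g' j)
        + ∑ j ∈ range m, (∑ i ∈ range (j+1), w i) * (g' j - g' (j+1)) := by
    rw [← sum_add_distrib]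
    exact sum_congr rfl fun j _ => by ring
  rw [hrw, abel_sum w g' m, hw1, one_mul]
  rw [hid, htel] at hkey
  have : g' m = g (m-1) := by simp [hg']
  linarith [hkey, this, h0]

section
variable (f f' : ℝ → ℝ)
  (hf : ∀ x ∈ Set.Ici (0 : ℝ), HasDerivAt f (f' x) x)
  (hsupadd : ∀ u v : ℝ, 0 ≤ u → 0 ≤ v → f' u + f' v ≤ f' (u + v))

include hf hsupadd in
lemma psi_right (c a b : ℝ) (hc : 0 ≤ c) (hca : c ≤ a) (hab : a ≤ b) :
    f a - f (a - c) - f' c * a ≤ f b - f (b - c) - f' c * b := by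
  rcases eq_or_lt_of_le hab with rfl | hab
  · exact le_refl _
  set g : ℝ → ℝ := fun t => f t - f (t - c) - f' c * t with hg
  have hd : ∀ t ∈ Set.Ici c, HasDerivAt g (f' t - f' (t - c) - f' c) t := by
    intro t ht
    have h1 : HasDerivAt f (f' t) t := hf t (le_trans hc ht)
    have h2 : HasDerivAt (fun t => f (t - c)) (f' (t - c)) t := by
      have := (hf (t - c) (by simp only [Set.mem_Ici] at ht ⊢; linarith)).comp t
        ((hasDerivAt_id t).sub_const c)
      simpa [Function.comp_def] using this
    have h3 := (h1.sub h2).sub ((hasDerivAt_id t).const_mul (f' c))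
    rw [mul_one] at h3
    exact h3
  have hcont : ContinuousOn g (Set.Icc a b) := by
    intro t ht
    exact ((hd t (le_trans hca ht.1)).continuousAt).continuousWithinAt
  obtain ⟨ξ, hξ, hslope⟩ := exists_hasDerivAt_eq_slope g _ hab hcont
    (fun t ht => hd t (le_trans hca (le_of_lt ht.1)))
  have hξc : c ≤ ξ := le_trans hca (le_of_lt hξ.1)
  have hnn : 0 ≤ f' ξ - f' (ξ - c) - f' c := by
    have := hsupadd (ξ - c) c (by linarith) hc
    simp only [sub_add_cancel] at this
    linarith
  have : 0 ≤ (g b - g a) / (b - a) := hslope ▸ hnn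
  have hba : 0 < b - a := by linarith
  have := (div_nonneg_iff.mp this)
  have hgab : g a ≤ g b := by
    rcases this with ⟨h, _⟩ | ⟨_, h⟩
    · linarith
    · linarith
  simpa [hg] using hgab

include hf hsupadd in
lemma psi_left (c a b : ℝ) (ha : 0 ≤ a) (hab : a ≤ b) (hbc : b ≤ c) :
    f b - f (c - b) - f' c * b ≤ f a - f (c - a) - f' c * a := by
  rcases eq_or_lt_of_le hab with rfl | hab
  · exact le_refl _
  have hc : 0 ≤ c := le_trans ha (le_trans hab.le hbc)
  set g : ℝ → ℝ := fun t => f t - f (c - t) - f' c * t with hg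
  have hd : ∀ t ∈ Set.Icc (0:ℝ) c, HasDerivAt g (f' t + f' (c - t) - f' c) t := by
    intro t ht
    have h1 : HasDerivAt f (f' t) t := hf t ht.1
    have h2 : HasDerivAt (fun t => f (c - t)) (-f' (c - t)) t := by
      have := (hf (c - t) (by simp only [Set.mem_Ici]; linarith [ht.2])).comp t
        ((hasDerivAt_id t).const_sub c)
      · simpa [Function.comp_def] using this
    have := (h1.sub h2).sub ((hasDerivAt_id t).const_mul (f' c))
    exact this.congr_deriv (by ring)
  have hcont : ContinuousOn g (Set.Icc a b) := fun t ht =>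
    ((hd t ⟨le_trans ha ht.1, le_trans ht.2 hbc⟩).continuousAt).continuousWithinAt
  obtain ⟨ξ, hξ, hslope⟩ := exists_hasDerivAt_eq_slope g _ hab hcont
    (fun t ht => hd t ⟨le_trans ha ht.1.le, le_trans ht.2.le hbc⟩)
  have hnp : f' ξ + f' (c - ξ) - f' c ≤ 0 := by
    have := hsupadd ξ (c - ξ) (le_trans ha hξ.1.le) (by linarith [hξ.2, hbc])
    simp only [add_sub_cancel] at this
    linarith
  have hba : 0 < b - a := by linarith
  have hs : (g b - g a) / (b - a) ≤ 0 := hslope ▸ hnp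
  have hgab : g b ≤ g a := by
    rcases div_nonpos_iff.mp hs with ⟨h, h'⟩ | ⟨h, _⟩
    · linarith
    · linarith
  simpa [hg] using hgab

end

lemma js_superquad (f f' : ℝ → ℝ)
    (hf : ∀ x ∈ Set.Ici (0 : ℝ), HasDerivAt f (f' x) x)
    (hsupadd : ∀ u v : ℝ, 0 ≤ u → 0 ≤ v → f' u + f' v ≤ f' (u + v))
    (hf0 : f 0 ≤ 0)
    (m : ℕ) (hm : 1 ≤ m) (w y : ℕ → ℝ)
    (hy0 : ∀ i < m, 0 ≤ y i)
    (hymono : ∀ i j, i ≤ j → j < m → y i ≤ y j)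
    (hw1 : ∑ i ∈ range m, w i = 1)
    (hW : ∀ j ≤ m, 0 ≤ ∑ i ∈ range j, w i ∧ ∑ i ∈ range j, w i ≤ 1) :
    f (∑ i ∈ range m, w i * y i) + ∑ i ∈ range m, w i * f |y i - ∑ j ∈ range m, w j * y j|
      ≤ ∑ i ∈ range m, w i * f (y i) := by
  set c : ℝ := ∑ i ∈ range m, w i * y i with hc
  have hylow : y 0 ≤ c := stef_low w y m hm hymono hw1 (fun j hj => (hW j hj).2)
  have hyhigh : c ≤ y (m-1) := stef_high w y m hm hymono hw1 (fun j hj => (hW j hj).1)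
  have hc0 : 0 ≤ c := le_trans (hy0 0 hm) hylow
  set L : ℝ := f' c with hL
  set ψ : ℝ → ℝ := fun t => f t - f |t - c| - L * t with hψ
  set ρ : ℕ → ℝ := fun i => ψ (max (y i) c) with hρ
  set σ : ℕ → ℝ := fun i => ψ (min (y i) c) with hσ
  -- ψ on [c,∞): explicit form
  have hψr : ∀ t, c ≤ t → ψ t = f t - f (t - c) - L * t := by
    intro t ht; simp [hψ, abs_of_nonneg (by linarith : (0:ℝ) ≤ t - c)]
  have hψl : ∀ t, t ≤ c → ψ t = f t - f (c - t) - L * t := by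
    intro t ht
    simp [hψ, abs_of_nonpos (by linarith : t - c ≤ 0), neg_sub]
  -- ρ monotone
  have hρmono : ∀ i j, i ≤ j → j < m → ρ i ≤ ρ j := by
    intro i j hij hj
    have h1 : c ≤ max (y i) c := le_max_right _ _
    have h2 : max (y i) c ≤ max (y j) c := max_le_max (hymono i j hij hj) le_rfl
    have := psi_right f f' hf hsupadd c (max (y i) c) (max (y j) c) hc0 h1 h2
    rw [hρ]; dsimp only
    rw [hψr _ h1, hψr _ (le_trans h1 h2)]; exact this
  have hσanti : ∀ i j, i ≤ j → j < m → σ j ≤ σ i := by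
    intro i j hij hj
    have h1 : min (y i) c ≤ min (y j) c := min_le_min (hymono i j hij hj) le_rfl
    have h2 : min (y j) c ≤ c := min_le_right _ _
    have h0 : 0 ≤ min (y i) c := le_min (hy0 i (lt_of_le_of_lt hij hj)) hc0
    have := psi_left f f' hf hsupadd c (min (y i) c) (min (y j) c) h0 h1 h2
    rw [hσ]; dsimp only
    rw [hψl _ h2, hψl _ (le_trans h1 h2)]; exact this
  have hρ0 : ρ 0 = ψ c := by rw [hρ]; dsimp only; rw [max_eq_right hylow]
  have hσm : σ (m-1) = ψ c := by rw [hσ]; dsimp only; rw [min_eq_right hyhigh]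
  have hρlow : ψ c ≤ ∑ i ∈ range m, w i * ρ i := by
    rw [← hρ0]; exact stef_low w ρ m hm hρmono hw1 (fun j hj => (hW j hj).2)
  have hσlow : ψ c ≤ ∑ i ∈ range m, w i * σ i := by
    have := stef_high w (fun i => -σ i) m hm
      (fun i j hij hj => by simpa using hσanti i j hij hj) hw1 (fun j hj => (hW j hj).1)
    have h2 : ∑ i ∈ range m, w i * -σ i = -∑ i ∈ range m, w i * σ i := by
      rw [← sum_neg_distrib]; exact sum_congr rfl fun i _ => by ring
    rw [h2] at this
    linarith [hσm ▸ this]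
  have hsplit : ∀ i < m, ψ (y i) = ρ i + σ i - ψ c := by
    intro i hi
    rcases le_total (y i) c with h | h
    · rw [hρ, hσ]; dsimp only; rw [max_eq_right h, min_eq_left h]; ring
    · rw [hρ, hσ]; dsimp only; rw [max_eq_left h, min_eq_right h]; ring
  have hsum : ∑ i ∈ range m, w i * ψ (y i)
      = ∑ i ∈ range m, w i * ρ i + ∑ i ∈ range m, w i * σ i - ψ c := by
    have : ∑ i ∈ range m, w i * ψ (y i)
        = ∑ i ∈ range m, (w i * ρ i + w i * σ i - w i * ψ c) := by
      refine sum_congr rfl fun i hi => ?_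
      rw [hsplit i (mem_range.mp hi)]; ring
    rw [this, sum_sub_distrib, sum_add_distrib, ← sum_mul, hw1, one_mul]
  have hmain : ψ c ≤ ∑ i ∈ range m, w i * ψ (y i) := by rw [hsum]; linarith
  -- unfold ψ
  have hexp : ∑ i ∈ range m, w i * ψ (y i)
      = ∑ i ∈ range m, w i * f (y i) - ∑ i ∈ range m, w i * f |y i - c| - L * c := by
    have : ∑ i ∈ range m, w i * ψ (y i)
        = ∑ i ∈ range m, (w i * f (y i) - w i * f |y i - c| - L * (w i * y i)) := by
      refine sum_congr rfl fun i _ => ?_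
      simp only [hψ]; ring
    rw [this, sum_sub_distrib, sum_sub_distrib, ← mul_sum, ← hc]
  have hψc : f c - L * c ≤ ψ c := by
    simp only [hψ, sub_self, abs_zero]
    linarith
  rw [hexp] at hmain
  linarith

lemma merge_sum (k n : ℕ) (hk : k ≤ n) (A B : ℕ → ℝ) (a b : ℝ) :
    ∑ i ∈ range (n+1), ((if i < k then A i else if i = k then a else A (i-1)) *
        (if i < k then B i else if i = k then b else B (i-1)))
      = ∑ i ∈ range n, A i * B i + a * b := by
  induction n, hk using Nat.le_induction with
  | base =>
    rw [sum_range_succ]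
    simp only [lt_irrefl, if_false, if_pos rfl, if_true]
    congr 1
    refine sum_congr rfl fun i hi => ?_
    rw [mem_range] at hi
    simp [hi]
  | succ n hn ih =>
    rw [sum_range_succ, ih, sum_range_succ (fun i => A i * B i)]
    have h1 : ¬ (n + 1 < k) := by omega
    have h2 : ¬ (n + 1 = k) := by omega
    simp only [h1, h2, if_false]
    have : n + 1 - 1 = n := rfl
    rw [this]; ring
theorem stmt18 (f f' C : ℝ → ℝ)
    (hf : ∀ x ∈ Set.Ici (0 : ℝ), HasDerivAt f (f' x) x)
    (hf'c : ContinuousOn f' (Set.Ici (0 : ℝ)))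
    (hsupadd : ∀ u v : ℝ, 0 ≤ u → 0 ≤ v → f' u + f' v ≤ f' (u + v))
    (hsq : ∀ x, 0 ≤ x → ∀ y, 0 ≤ y → f x + C x * (y - x) + f |y - x| ≤ f y)
    (n : ℕ) (hn : 0 < n) (p q x : ℕ → ℝ)
    (hx0 : ∀ i < n, 0 ≤ x i)
    (hmono : ∀ i j, i ≤ j → j < n → x i ≤ x j)
    (hp1 : ∑ i ∈ Finset.range n, p i = 1)
    (hq1 : ∑ i ∈ Finset.range n, q i = 1)
    (hpJS : ∀ j ≤ n, 0 ≤ ∑ i ∈ Finset.range j, p i ∧ ∑ i ∈ Finset.range j, p i ≤ 1)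
    (hqJS : ∀ j, 1 ≤ j → j < n →
      0 < ∑ i ∈ Finset.range j, q i ∧ ∑ i ∈ Finset.range j, q i < 1)
    (hpq : ∃ i < n, p i ≠ q i)
    (Mstar : ℝ)
    (hM : IsGreatest {r : ℝ | ∃ i, 1 ≤ i ∧ i ≤ n ∧
      (r = (∑ j ∈ Finset.range i, p j) / (∑ j ∈ Finset.range i, q j) ∨
        r = (∑ j ∈ Finset.Ico (i - 1) n, p j) / (∑ j ∈ Finset.Ico (i - 1) n, q j))} Mstar) :
    ((∑ i ∈ Finset.range n, p i * f (x i)) - f (∑ i ∈ Finset.range n, p i * x i)) -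
        Mstar * ((∑ i ∈ Finset.range n, q i * f (x i)) -
          f (∑ i ∈ Finset.range n, q i * x i)) ≤
      -(∑ i ∈ Finset.range n, (Mstar * q i - p i) *
          f |x i - ∑ j ∈ Finset.range n, q j * x j|) -
        f |∑ i ∈ Finset.range n, (p i - q i) * x i| := by
  classical
  set M := Mstar with hMdef
  -- M ≥ 1
  have hM1 : 1 ≤ M := by
    have h1 : (1:ℝ) ∈ {r : ℝ | ∃ i, 1 ≤ i ∧ i ≤ n ∧
        (r = (∑ j ∈ Finset.range i, p j) / (∑ j ∈ Finset.range i, q j) ∨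
          r = (∑ j ∈ Finset.Ico (i - 1) n, p j) / (∑ j ∈ Finset.Ico (i - 1) n, q j))} :=
      ⟨n, hn, le_rfl, Or.inl (by rw [hp1, hq1]; norm_num)⟩
    exact hM.2 h1
  have hM0 : (0:ℝ) < M := by linarith
  -- basic partial sums facts for q
  have hQ0 : ∀ j ≤ n, 0 ≤ ∑ i ∈ Finset.range j, q i := by
    intro j hj
    rcases Nat.eq_zero_or_pos j with rfl | hj1
    · simp
    rcases eq_or_lt_of_le hj with rfl | hjn
    · rw [hq1]; norm_num
    · exact (hqJS j hj1 hjn).1.le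
  have hQ1 : ∀ j ≤ n, ∑ i ∈ Finset.range j, q i ≤ 1 := by
    intro j hj
    rcases Nat.eq_zero_or_pos j with rfl | hj1
    · simp
    rcases eq_or_lt_of_le hj with rfl | hjn
    · rw [hq1]
    · exact (hqJS j hj1 hjn).2.le
  -- M bounds from hM
  have hMfront : ∀ j, 1 ≤ j → j ≤ n →
      ∑ i ∈ Finset.range j, p i ≤ M * ∑ i ∈ Finset.range j, q i := by
    intro j h1 h2
    have hr : (∑ i ∈ Finset.range j, p i) / (∑ i ∈ Finset.range j, q i) ≤ M :=
      hM.2 ⟨j, h1, h2, Or.inl rfl⟩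
    have hq0 : 0 < ∑ i ∈ Finset.range j, q i := by
      rcases eq_or_lt_of_le h2 with rfl | hjn
      · rw [hq1]; norm_num
      · exact (hqJS j h1 hjn).1
    calc ∑ i ∈ Finset.range j, p i
        = ((∑ i ∈ Finset.range j, p i) / (∑ i ∈ Finset.range j, q i))
          * ∑ i ∈ Finset.range j, q i := by field_simp
      _ ≤ M * ∑ i ∈ Finset.range j, q i := by
          exact mul_le_mul_of_nonneg_right hr hq0.le
  have hIco : ∀ j ≤ n, ∑ i ∈ Finset.Ico j n, p i = 1 - ∑ i ∈ Finset.range j, p i := by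
    intro j hj
    have := Finset.sum_range_add_sum_Ico p hj
    rw [hp1] at this; linarith
  have hIcoq : ∀ j ≤ n, ∑ i ∈ Finset.Ico j n, q i = 1 - ∑ i ∈ Finset.range j, q i := by
    intro j hj
    have := Finset.sum_range_add_sum_Ico q hj
    rw [hq1] at this; linarith
  have hMback : ∀ j, j < n →
      1 - ∑ i ∈ Finset.range j, p i ≤ M * (1 - ∑ i ∈ Finset.range j, q i) := by
    intro j hjn
    have hr : (∑ i ∈ Finset.Ico (j+1-1) n, p i) / (∑ i ∈ Finset.Ico (j+1-1) n, q i) ≤ M :=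
      hM.2 ⟨j+1, by omega, by omega, Or.inr rfl⟩
    simp only [Nat.add_sub_cancel] at hr
    rw [hIco j (by omega), hIcoq j (by omega)] at hr
    have hq0 : 0 < 1 - ∑ i ∈ Finset.range j, q i := by
      rcases Nat.eq_zero_or_pos j with rfl | hj1
      · simp
      · have := (hqJS j hj1 hjn).2; linarith
    calc 1 - ∑ i ∈ Finset.range j, p i
        = ((1 - ∑ i ∈ Finset.range j, p i) / (1 - ∑ i ∈ Finset.range j, q i))
          * (1 - ∑ i ∈ Finset.range j, q i) := by field_simp
      _ ≤ M * (1 - ∑ i ∈ Finset.range j, q i) :=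
          mul_le_mul_of_nonneg_right hr hq0.le
  -- means
  set xp : ℝ := ∑ i ∈ Finset.range n, p i * x i with hxp
  set xq : ℝ := ∑ i ∈ Finset.range n, q i * x i with hxq
  have hxplow : x 0 ≤ xp := stef_low p x n hn hmono hp1 (fun j hj => (hpJS j hj).2)
  have hxphigh : xp ≤ x (n-1) := stef_high p x n hn hmono hp1 (fun j hj => (hpJS j hj).1)
  have hxp0 : 0 ≤ xp := le_trans (hx0 0 hn) hxplow
  -- insertion index
  have hex : ∃ j, j = n ∨ (j < n ∧ xp < x j) := ⟨n, Or.inl rfl⟩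
  set k := Nat.find hex with hkdef
  have hkn : k ≤ n := Nat.find_le (Or.inl rfl)
  have hkbelow : ∀ i, i < k → x i ≤ xp := by
    intro i hi
    have := Nat.find_min hex hi
    push_neg at this
    have hin : i < n := lt_of_lt_of_le hi hkn
    exact this.2 hin
  have hkabove : k < n → xp < x k := by
    intro hklt
    have := Nat.find_spec hex
    rcases this with h | h
    · omega
    · exact h.2
  -- merged sequences
  set w : ℕ → ℝ := fun i => if i < k then q i - p i / M else if i = k then 1/M
    else q (i-1) - p (i-1) / M with hwdef
  set y : ℕ → ℝ := fun i => if i < k then x i else if i = k then xp else x (i-1) with hydef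
  -- generic application of merge_sum
  have happ : ∀ (F : ℝ → ℝ), ∑ i ∈ Finset.range (n+1), w i * F (y i)
      = ∑ i ∈ Finset.range n, (q i - p i / M) * F (x i) + (1/M) * F xp := by
    intro F
    have hms := merge_sum k n hkn (fun i => q i - p i / M) (fun i => F (x i)) (1/M) (F xp)
    refine Eq.trans ?_ hms
    refine Finset.sum_congr rfl fun i _ => ?_
    by_cases h1 : i < k
    · simp [hwdef, hydef, h1]
    · by_cases h2 : i = k
      · simp [hwdef, hydef, h1, h2]
      · simp [hwdef, hydef, h1, h2]
  -- partial sums of merged weights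
  have hpart1 : ∀ j, j ≤ k → ∑ i ∈ Finset.range j, w i
      = ∑ i ∈ Finset.range j, q i - (∑ i ∈ Finset.range j, p i) / M := by
    intro j hj
    rw [Finset.sum_div, ← Finset.sum_sub_distrib]
    refine Finset.sum_congr rfl fun i hi => ?_
    rw [Finset.mem_range] at hi
    have : i < k := lt_of_lt_of_le hi hj
    simp [hwdef, this]
  have hpart2 : ∀ j, k ≤ j → j ≤ n → ∑ i ∈ Finset.range (j+1), w i
      = ∑ i ∈ Finset.range j, q i - (∑ i ∈ Finset.range j, p i) / M + 1/M := by
    intro j hjk hjn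
    have hms := merge_sum k j hjk (fun i => q i - p i / M) (fun _ => (1:ℝ)) (1/M) 1
    have : ∑ i ∈ Finset.range (j+1), w i = ∑ i ∈ Finset.range (j+1),
        ((if i < k then q i - p i / M else if i = k then 1/M else q (i-1) - p (i-1)/M) *
          (if i < k then (1:ℝ) else if i = k then 1 else 1)) := by
      refine Finset.sum_congr rfl fun i _ => ?_
      by_cases h1 : i < k
      · simp [hwdef, h1]
      · by_cases h2 : i = k
        · simp [hwdef, h1, h2]
        · simp [hwdef, h1, h2]
    rw [this, hms]
    simp only [mul_one]
    rw [Finset.sum_sub_distrib, Finset.sum_div]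
  have hw1 : ∑ i ∈ Finset.range (n+1), w i = 1 := by
    rw [hpart2 n hkn le_rfl, hq1, hp1]
    field_simp; ring
  have hW : ∀ j ≤ n+1, 0 ≤ ∑ i ∈ Finset.range j, w i ∧ ∑ i ∈ Finset.range j, w i ≤ 1 := by
    intro j hj
    rcases le_or_gt j k with hjk | hjk
    · rw [hpart1 j hjk]
      rcases Nat.eq_zero_or_pos j with rfl | hj1
      · simp
      have hjn : j ≤ n := le_trans hjk hkn
      have hf1 := hMfront j hj1 hjn
      have hp0 := (hpJS j hjn).1
      have hq1' := hQ1 j hjn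
      constructor
      · rw [sub_nonneg, div_le_iff₀ hM0]; linarith
      · have : 0 ≤ (∑ i ∈ Finset.range j, p i) / M := div_nonneg hp0 hM0.le
        linarith
    · -- j ≥ k+1
      obtain ⟨j', rfl⟩ : ∃ j', j = j' + 1 := ⟨j - 1, by omega⟩
      have hjk' : k ≤ j' := by omega
      have hjn' : j' ≤ n := by omega
      rw [hpart2 j' hjk' hjn']
      have hp0 := (hpJS j' hjn').1
      have hp1' := (hpJS j' hjn').2
      have hq0 := hQ0 j' hjn'
      have hq1' := hQ1 j' hjn'
      constructor
      · have h1 : 0 ≤ (1 - ∑ i ∈ Finset.range j', p i) / M := div_nonneg (by linarith) hM0.le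
        have h2 : (∑ i ∈ Finset.range j', q i - (∑ i ∈ Finset.range j', p i) / M + 1/M)
            = ∑ i ∈ Finset.range j', q i + (1 - ∑ i ∈ Finset.range j', p i)/M := by
          field_simp; ring
        rw [h2]; linarith
      · rcases eq_or_lt_of_le hjn' with rfl | hjn''
        · rw [hp1, hq1]; field_simp; linarith
        · have hb := hMback j' hjn''
          have h3 : (1 - ∑ i ∈ Finset.range j', p i) / M
              ≤ 1 - ∑ i ∈ Finset.range j', q i := by
            rw [div_le_iff₀ hM0]
            calc 1 - ∑ i ∈ Finset.range j', p i
                ≤ M * (1 - ∑ i ∈ Finset.range j', q i) := hb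
              _ = (1 - ∑ i ∈ Finset.range j', q i) * M := by ring
          have h2 : (∑ i ∈ Finset.range j', q i - (∑ i ∈ Finset.range j', p i) / M + 1/M)
              = ∑ i ∈ Finset.range j', q i + (1 - ∑ i ∈ Finset.range j', p i)/M := by
            field_simp; ring
          rw [h2]; linarith
  -- y properties
  have hy0 : ∀ i < n+1, 0 ≤ y i := by
    intro i hi
    by_cases h1 : i < k
    · simpa [hydef, h1] using hx0 i (lt_of_lt_of_le h1 hkn)
    by_cases h2 : i = k
    · simpa [hydef, h1, h2] using hxp0
    · have : i - 1 < n := by omega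
      simpa [hydef, h1, h2] using hx0 (i-1) this
  have hymono : ∀ i j, i ≤ j → j < n+1 → y i ≤ y j := by
    intro i j hij hjn
    have hyval : ∀ t, y t = if t < k then x t else if t = k then xp else x (t-1) := fun t => rfl
    by_cases hik : i < k
    · by_cases hjk : j < k
      · rw [hyval i, hyval j, if_pos hik, if_pos hjk]
        exact hmono i j hij (lt_of_lt_of_le hjk hkn)
      · by_cases hjek : j = k
        · rw [hyval i, hyval j, if_pos hik, if_neg hjk, if_pos hjek]
          exact hkbelow i hik
        · have hkn' : k < n := by omega
          rw [hyval i, hyval j, if_pos hik, if_neg hjk, if_neg hjek]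
          have h1 : x i ≤ xp := hkbelow i hik
          have h2 : xp ≤ x (j-1) := le_trans (hkabove hkn').le
            (hmono k (j-1) (by omega) (by omega))
          linarith
    · by_cases hiek : i = k
      · by_cases hjk : j < k
        · omega
        by_cases hjek : j = k
        · rw [hyval i, hyval j, if_neg hik, if_pos hiek, if_neg hjk, if_pos hjek]
        · have hkn' : k < n := by omega
          rw [hyval i, hyval j, if_neg hik, if_pos hiek, if_neg hjk, if_neg hjek]
          exact le_trans (hkabove hkn').le (hmono k (j-1) (by omega) (by omega))
      · have hjk : ¬ j < k := by omega
        have hjek : j ≠ k := by omega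
        rw [hyval i, hyval j, if_neg hik, if_neg hiek, if_neg hjk, if_neg hjek]
        exact hmono (i-1) (j-1) (by omega) (by omega)
  -- f 0 ≤ 0
  have hf0 : f 0 ≤ 0 := by
    have := hsq 0 le_rfl 0 le_rfl
    simp at this
    linarith
  -- the mean of merged sequence
  have hbar : ∑ i ∈ Finset.range (n+1), w i * y i = xq := by
    have := happ id
    simp only [id] at this
    rw [this]
    have h1 : ∑ i ∈ Finset.range n, (q i - p i / M) * x i
        = xq - xp / M := by
      rw [hxq, hxp, Finset.sum_div, ← Finset.sum_sub_distrib]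
      refine Finset.sum_congr rfl fun i _ => by ring
    rw [h1]; field_simp; ring
  -- apply JS
  have hjs := js_superquad f f' hf hsupadd hf0 (n+1) (by omega) w y hy0 hymono hw1 hW
  rw [hbar] at hjs
  have hjs1 : ∑ i ∈ Finset.range (n+1), w i * f (y i)
      = ∑ i ∈ Finset.range n, (q i - p i / M) * f (x i) + (1/M) * f xp := happ f
  have hjs2 : ∑ i ∈ Finset.range (n+1), w i * f |y i - xq|
      = ∑ i ∈ Finset.range n, (q i - p i / M) * f |x i - xq| + (1/M) * f |xp - xq| :=
    happ (fun t => f |t - xq|)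
  rw [hjs1, hjs2] at hjs
  -- final algebra
  have hd1 : ∑ i ∈ Finset.range n, (q i - p i / M) * f (x i)
      = ∑ i ∈ Finset.range n, q i * f (x i)
        - (∑ i ∈ Finset.range n, p i * f (x i)) / M := by
    rw [Finset.sum_div, ← Finset.sum_sub_distrib]
    exact Finset.sum_congr rfl fun i _ => by ring
  have hd2 : ∑ i ∈ Finset.range n, (q i - p i / M) * f |x i - xq|
      = ∑ i ∈ Finset.range n, q i * f |x i - xq|
        - (∑ i ∈ Finset.range n, p i * f |x i - xq|) / M := by
    rw [Finset.sum_div, ← Finset.sum_sub_distrib]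
    exact Finset.sum_congr rfl fun i _ => by ring
  have hd3 : ∑ i ∈ Finset.range n, (M * q i - p i) * f |x i - xq|
      = M * ∑ i ∈ Finset.range n, q i * f |x i - xq|
        - ∑ i ∈ Finset.range n, p i * f |x i - xq| := by
    rw [Finset.mul_sum, ← Finset.sum_sub_distrib]
    exact Finset.sum_congr rfl fun i _ => by ring
  have hd4 : ∑ i ∈ Finset.range n, (p i - q i) * x i = xp - xq := by
    rw [hxp, hxq, ← Finset.sum_sub_distrib]
    exact Finset.sum_congr rfl fun i _ => by ring
  rw [hd1, hd2] at hjs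
  rw [hd3, hd4]
  have hmul := mul_le_mul_of_nonneg_left hjs hM0.le
  have hMne : M ≠ 0 := hM0.ne'
  set a := ∑ i ∈ Finset.range n, q i * f |x i - xq|
  set b := ∑ i ∈ Finset.range n, p i * f |x i - xq|
  set u := ∑ i ∈ Finset.range n, q i * f (x i)
  set v := ∑ i ∈ Finset.range n, p i * f (x i)
  have hexp : M * (f xq + (a - b / M + 1/M * f |xp - xq|))
      = M * f xq + M * a - b + f |xp - xq| := by field_simp; ring
  have hexp2 : M * (u - v / M + 1/M * f xp) = M * u - v + f xp := by field_simp
  rw [hexp, hexp2] at hmul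
  linarith
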